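/- Let p ≥ 3 be a prime, s ≥ 2, and let t1 ≥ 1, t2,…,t_{s−1} ≥ 0, ts ≥ 1 be integers. Then the ℤpℤp²⋯ℤp^s-linear generalized Hadamard code Φ(ℋ_p^{t1,…,ts}) is nonlinear over ℤp, i.e., it is not a ℤp-linear subspace of ℤp^n. -/

import Mathlib

/-- The `i`-th digit of `n` in base `p`. -/
def pdigit (p i n : ℕ) : ℕ := n / p ^ i % p

/-- The generalized Carlet Gray map `φ_r : ℤ_{p^r} → ℤ_p^{p^{r-1}}`:
`φ_r(u) = (u_{r-1},…,u_{r-1}) + (u_0,…,u_{r-2}) Y_{r-1}`, where the `z`-th column of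
`Y_{r-1}` consists of the `p`-ary digits of `z`. -/
def grayMap (p r : ℕ) (u : ZMod (p ^ r)) : Fin (p ^ (r - 1)) → ZMod p :=
  fun z => (pdigit p (r - 1) u.val : ZMod p) +
    ∑ i ∈ Finset.range (r - 1), (pdigit p i u.val : ZMod p) * (pdigit p i (z : ℕ) : ZMod p)
/-- The mixed alphabet space `ℤ_p^{α₁} × ℤ_{p²}^{α₂} × ⋯ × ℤ_{p^s}^{α_s}`
(block `r`, `0 ≤ r ≤ s-1`, has `α r` coordinates over `ℤ_{p^{r+1}}`). -/
abbrev MixedVec (p s : ℕ) (α : Fin s → ℕ) : Type :=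
  ∀ r : Fin s, Fin (α r) → ZMod (p ^ ((r : ℕ) + 1))

/-- Coordinates of the Gray map image: block `r` contributes `α r` groups of `p^r`
coordinates over `ℤ_p`. -/
abbrev GrayIdx (p s : ℕ) (α : Fin s → ℕ) : Type :=
  Σ r : Fin s, Fin (α r) × Fin (p ^ (r : ℕ))

/-- The extended Gray map `Φ : ℤ_p^{α₁} × ℤ_{p²}^{α₂} × ⋯ × ℤ_{p^s}^{α_s} → ℤ_p^n`,
applying `φ_{r+1}` coordinatewise on block `r`. -/
def PhiMap (p s : ℕ) (α : Fin s → ℕ) (x : MixedVec p s α) : GrayIdx p s α → ZMod p :=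
  fun q => grayMap p ((q.1 : ℕ) + 1) (x q.1 q.2.1) q.2.2

/-- A matrix over the mixed alphabet `ℤ_p × ℤ_{p²} × ⋯ × ℤ_{p^s}`, with `m` rows
and `α r` columns over `ℤ_{p^{r+1}}`. -/
structure MixedMat (p s : ℕ) where
  m : ℕ
  α : Fin s → ℕ
  row : Fin m → MixedVec p s α

/-- Total (ℕ-indexed) access to the entries of a mixed matrix. -/
def MixedMat.entry {p s : ℕ} (A : MixedMat p s) (k : ℕ) (r : Fin s) (c : ℕ) :
    ZMod (p ^ ((r : ℕ) + 1)) :=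
  if hk : k < A.m then
    if hc : c < A.α r then A.row ⟨k, hk⟩ r ⟨c, hc⟩ else 0
  else 0

/-- The base matrix `A_p^{1,0,…,0,1}`: its first block (over `ℤ_p`) consists of the `p`
columns `(1; c)`, `c = 0,…,p-1`, and its block `r ≥ 1` (over `ℤ_{p^{r+1}}`) consists of
the `p-1` columns `(p^r; c+1)`, `c = 0,…,p-2`. -/
def baseMat (p s : ℕ) : MixedMat p s where
  m := 2
  α := fun r => if (r : ℕ) = 0 then p else p - 1
  row := fun k r c =>
    if (k : ℕ) = 0 then ((p ^ (r : ℕ) : ℕ) : ZMod (p ^ ((r : ℕ) + 1)))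
    else if (r : ℕ) = 0 then (((c : ℕ) : ℕ) : ZMod (p ^ ((r : ℕ) + 1)))
    else (((c : ℕ) + 1 : ℕ) : ZMod (p ^ ((r : ℕ) + 1)))

/-- One step of the recursive construction: from `A = A_p^{t₁,…,t_s}`, adjoin one new row
of order `p^{s-i'}` (the paper's index `i` equals `i' + 1`), obtaining the blocks
`(A₁ ⋯ A₁ | P₁ ⋯ P_{s-i} | Q₁ ⋯ Q_{i-1})` with the new row appended at the bottom. -/
def stepMat (p s : ℕ) (i' : ℕ) (A : MixedMat p s) : MixedMat p s where
  m := A.m + 1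
  α := fun r =>
    if (r : ℕ) = 0 then p * A.α r
    else if (r : ℕ) + i' + 1 ≤ s then
      (p - 1) * p ^ ((r : ℕ) * (A.m - 1)) + p ^ ((r : ℕ) + 1) * A.α r
    else p ^ (s - i') * A.α r
  row := fun k r c =>
    if (r : ℕ) = 0 then
      -- `p` copies of `A₁`, new row constant `0,1,…,p-1` on the successive copies
      if (k : ℕ) < A.m then A.entry (k : ℕ) r ((c : ℕ) % A.α r)
      else (((c : ℕ) / A.α r : ℕ) : ZMod (p ^ ((r : ℕ) + 1)))
    else if (r : ℕ) + i' + 1 ≤ s then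
      -- the block `P_r`
      if (c : ℕ) < (p - 1) * p ^ ((r : ℕ) * (A.m - 1)) then
        -- `p-1` copies of `M_r` (columns: all vectors in `{p^r} × {0,p,…,p(p^r-1)}^{m-1}`),
        -- new row constant `1,…,p-1` on the successive copies
        if (k : ℕ) < A.m then
          if (k : ℕ) = 0 then ((p ^ (r : ℕ) : ℕ) : ZMod (p ^ ((r : ℕ) + 1)))
          else ((p * ((c : ℕ) % p ^ ((r : ℕ) * (A.m - 1)) / (p ^ (r : ℕ)) ^ ((k : ℕ) - 1)
              % p ^ (r : ℕ)) : ℕ) : ZMod (p ^ ((r : ℕ) + 1)))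
        else (((c : ℕ) / p ^ ((r : ℕ) * (A.m - 1)) + 1 : ℕ) : ZMod (p ^ ((r : ℕ) + 1)))
      else
        -- `p^{r+1}` copies of `A_{r+1}`, new row constant `0,1,…,p^{r+1}-1`
        if (k : ℕ) < A.m then
          A.entry (k : ℕ) r (((c : ℕ) - (p - 1) * p ^ ((r : ℕ) * (A.m - 1))) % A.α r)
        else ((((c : ℕ) - (p - 1) * p ^ ((r : ℕ) * (A.m - 1))) / A.α r : ℕ) :
          ZMod (p ^ ((r : ℕ) + 1)))
    else
      -- the block `Q_k` with `k = r + i' + 1 - s`: `p^{s-i'}` copies of the corresponding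
      -- block of `A`, new row constant `p^k·0, p^k·1, …, p^k·(p^{s-i'}-1)`
      if (k : ℕ) < A.m then A.entry (k : ℕ) r ((c : ℕ) % A.α r)
      else ((p ^ ((r : ℕ) + i' + 1 - s) * ((c : ℕ) / A.α r) : ℕ) : ZMod (p ^ ((r : ℕ) + 1)))

/-- The matrix `A_p^{t₁,…,t_s}`: starting from `A_p^{1,0,…,0,1}`, apply the row-adjoining
construction `t₁ - 1` times with `i = 1`, then `t₂` times with `i = 2`, …, and finally
`t_s - 1` times with `i = s`. -/
def AMat (p s : ℕ) (t : Fin s → ℕ) : MixedMat p s :=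
  (List.finRange s).foldl
    (fun A (i : Fin s) =>
      (stepMat p s i.val)^[if i.val = 0 ∨ i.val = s - 1 then t i - 1 else t i] A)
    (baseMat p s)

/-- The `ℤ_pℤ_{p²}⋯ℤ_{p^s}`-additive code `ℋ_p^{t₁,…,t_s}`, generated by the rows
of `A_p^{t₁,…,t_s}`. -/
def HCode (p s : ℕ) (t : Fin s → ℕ) : AddSubgroup (MixedVec p s (AMat p s t).α) :=
  AddSubgroup.closure (Set.range (AMat p s t).row)

/-- The `ℤ_pℤ_{p²}⋯ℤ_{p^s}`-linear code `H_p^{t₁,…,t_s} = Φ(ℋ_p^{t₁,…,t_s})`. -/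
def PhiCode (p s : ℕ) (t : Fin s → ℕ) :
    Set (GrayIdx p s (AMat p s t).α → ZMod p) :=
  PhiMap p s (AMat p s t).α '' (HCode p s t : Set (MixedVec p s (AMat p s t).α))


section Aux

private lemma pdigit_lt' (p i n : ℕ) (hp : 0 < p) : pdigit p i n < p :=
  Nat.mod_lt _ hp

private lemma pdigit_zero' (p i : ℕ) : pdigit p i 0 = 0 := by simp [pdigit]

private lemma pdigit_of_lt' {p u : ℕ} (i : ℕ) (hu : u < p) :
    pdigit p i u = if i = 0 then u else 0 := by
  unfold pdigit
  rcases Nat.eq_zero_or_pos i with h | h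
  · simp [h, Nat.mod_eq_of_lt hu]
  · have h1 : u < p ^ i :=
      lt_of_lt_of_le hu (Nat.le_self_pow (by omega) p)
    rw [Nat.div_eq_of_lt h1, if_neg (by omega : ¬ i = 0)]
    simp

private lemma pdigit_pow' {p : ℕ} (hp : 1 < p) (i j : ℕ) :
    pdigit p j (p ^ i) = if j = i then 1 else 0 := by
  unfold pdigit
  rcases lt_trichotomy j i with h | h | h
  · have h1 : p ^ i / p ^ j = p ^ (i - j) := Nat.pow_div (le_of_lt h) (by omega)
    rw [h1]
    obtain ⟨k, hk⟩ : p ∣ p ^ (i - j) := dvd_pow_self p (by omega)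
    rw [hk, if_neg (by omega)]
    simp [Nat.mul_mod_right]
  · subst h
    rw [Nat.div_self (pow_pos (by omega) _)]
    simp [Nat.mod_eq_of_lt hp]
  · have h1 : p ^ i < p ^ j := Nat.pow_lt_pow_right hp h
    rw [Nat.div_eq_of_lt h1, if_neg (by omega)]
    simp

private lemma digit_sum' {p : ℕ} (hp : 0 < p) :
    ∀ (e n : ℕ), n < p ^ e → ∑ i ∈ Finset.range e, pdigit p i n * p ^ i = n := by
  intro e
  induction e with
  | zero =>
    intro n hn
    simp at hn ⊢
    omega
  | succ e ih =>
    intro n hn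
    rw [Finset.sum_range_succ']
    have h1 : ∀ i, pdigit p (i + 1) n * p ^ (i + 1) = (pdigit p i (n / p) * p ^ i) * p := by
      intro i
      unfold pdigit
      rw [pow_succ' p i, ← Nat.div_div_eq_div_mul]
      ring
    have h2 : ∑ i ∈ Finset.range e, pdigit p (i + 1) n * p ^ (i + 1)
        = (∑ i ∈ Finset.range e, pdigit p i (n / p) * p ^ i) * p := by
      rw [Finset.sum_mul]
      exact Finset.sum_congr rfl (fun i _ => h1 i)
    have h3 : n / p < p ^ e := by
      rw [Nat.div_lt_iff_lt_mul hp]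
      calc n < p ^ (e + 1) := hn
        _ = p ^ e * p := by ring
    rw [h2, ih _ h3]
    unfold pdigit
    simp only [pow_zero, Nat.div_one, mul_one]
    rw [mul_comm]
    exact Nat.div_add_mod n p

private lemma zmod_natCast_inj' {p a b : ℕ} (ha : a < p) (hb : b < p)
    (h : (a : ZMod p) = b) : a = b := by
  have h2 := congrArg ZMod.val h
  rwa [ZMod.val_cast_of_lt ha, ZMod.val_cast_of_lt hb] at h2

private lemma gray_const' {p : ℕ} (hp : 1 < p) {e : ℕ} (he : 2 ≤ e) {u : ℕ} (hu : u < p)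
    (z : Fin (p ^ (e - 1))) :
    grayMap p e (u : ZMod (p ^ e)) z = (u : ZMod p) * (pdigit p 0 (z : ℕ) : ZMod p) := by
  have hval : ((u : ZMod (p ^ e))).val = u :=
    ZMod.val_cast_of_lt (lt_of_lt_of_le hu (Nat.le_self_pow (by omega) p))
  unfold grayMap
  rw [hval, pdigit_of_lt' (e - 1) hu, if_neg (by omega)]
  rw [Finset.sum_eq_single 0]
  · rw [pdigit_of_lt' 0 hu, if_pos rfl]
    simp
  · intro i _ hne
    rw [pdigit_of_lt' i hu, if_neg hne]
    simp
  · intro h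
    exact absurd (Finset.mem_range.mpr (by omega)) h

private lemma gray_eq' {p : ℕ} (hp : 1 < p) {e : ℕ} (he : 2 ≤ e) (y : ZMod (p ^ e))
    {w : ℕ} (hw : w < p)
    (h : ∀ z : Fin (p ^ (e - 1)), grayMap p e y z = (w : ZMod p) * (pdigit p 0 (z : ℕ) : ZMod p)) :
    y = (w : ZMod (p ^ e)) := by
  haveI : NeZero (p ^ e) := ⟨pow_ne_zero _ (by omega)⟩
  have hlt : y.val < p ^ e := ZMod.val_lt y
  -- top digit is zero
  have hz0 : pdigit p (e - 1) y.val = 0 := by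
    have h0 := h ⟨0, pow_pos (by omega) _⟩
    unfold grayMap at h0
    simp [pdigit_zero'] at h0
    exact zmod_natCast_inj' (pdigit_lt' _ _ _ (by omega)) (by omega) (by simpa using h0)
  -- other digits
  have hdig : ∀ i, i < e - 1 →
      (pdigit p i y.val : ZMod p) = (w : ZMod p) * ((if 0 = i then 1 else 0 : ℕ) : ZMod p) := by
    intro i hi
    have hz := h ⟨p ^ i, Nat.pow_lt_pow_right hp hi⟩
    unfold grayMap at hz
    simp only at hz
    rw [Finset.sum_eq_single i] at hz
    · rw [pdigit_pow' hp i i, if_pos rfl] at hz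
      rw [pdigit_pow' hp i 0] at hz
      rw [hz0] at hz
      simpa using hz
    · intro j _ hne
      rw [pdigit_pow' hp i j, if_neg hne]
      simp
    · intro hmem
      exact absurd (Finset.mem_range.mpr (by omega)) hmem
  have hd0 : pdigit p 0 y.val = w := by
    have h5 := hdig 0 (by omega)
    rw [if_pos rfl, Nat.cast_one, mul_one] at h5
    exact zmod_natCast_inj' (pdigit_lt' _ _ _ (by omega)) hw h5
  have hdi : ∀ i, 1 ≤ i → i < e → pdigit p i y.val = 0 := by
    intro i h1 h2
    rcases Nat.lt_or_ge i (e - 1) with h3 | h3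
    · have h5 := hdig i h3
      rw [if_neg (by omega : ¬ 0 = i), Nat.cast_zero, mul_zero] at h5
      exact zmod_natCast_inj' (pdigit_lt' _ _ _ (by omega)) (by omega)
        (by simpa using h5)
    · have : i = e - 1 := by omega
      rw [this]; exact hz0
  have hsum := digit_sum' (by omega : 0 < p) e y.val hlt
  rw [Finset.sum_eq_single 0] at hsum
  · rw [hd0, pow_zero, mul_one] at hsum
    have : ((y.val : ℕ) : ZMod (p ^ e)) = y := ZMod.natCast_rightInverse y
    rw [← this, hsum]
  · intro i hi hne
    rw [hdi i (by omega) (Finset.mem_range.mp hi)]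
    ring
  · intro hmem
    exact absurd (Finset.mem_range.mpr (by omega)) hmem

private lemma iota_mod' (p m q n : ℕ) :
    ((p ^ m * (n % p ^ (q + 1)) : ℕ) : ZMod (p ^ (m + 1))) =
      ((p ^ m * n : ℕ) : ZMod (p ^ (m + 1))) := by
  have hnat : p ^ m * n
      = p ^ (m + 1) * (p ^ q * (n / p ^ (q + 1))) + p ^ m * (n % p ^ (q + 1)) := by
    conv_lhs => rw [← Nat.div_add_mod n (p ^ (q + 1))]
    rw [pow_succ p m, pow_succ p q]
    ring
  rw [hnat]
  push_cast
  rw [show ((p : ZMod (p ^ (m + 1)))) ^ (m + 1) = 0 from by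
    rw [← Nat.cast_pow, ZMod.natCast_self]]
  ring

end Aux

/-- `B` has a column in block `r` whose entries are `v0` in row 0, `v1` in row 1,
and `0` in all other rows. -/
private def specCol (p s : ℕ) (B : MixedMat p s) (r : Fin s)
    (v0 v1 : ZMod (p ^ ((r : ℕ) + 1))) : Prop :=
  ∃ c : Fin (B.α r), ∀ k : Fin B.m,
    B.row k r c = if (k : ℕ) = 0 then v0 else if (k : ℕ) = 1 then v1 else 0

private lemma specCol_step {p s : ℕ} (hp : 0 < p) (i' : ℕ) {A : MixedMat p s}
    (hm : 2 ≤ A.m) {r : Fin s} {v0 v1 : ZMod (p ^ ((r : ℕ) + 1))}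
    (h : specCol p s A r v0 v1) : specCol p s (stepMat p s i' A) r v0 v1 := by
  obtain ⟨c, hc⟩ := h
  have hα : 0 < A.α r := by have := c.isLt; omega
  have hcopy : ∀ (k : Fin (A.m + 1)) (hk : (k : ℕ) < A.m) (cc : ℕ) (hcc : cc < A.α r)
      (hcceq : cc = (c : ℕ)),
      A.entry (k : ℕ) r cc
        = if (k : ℕ) = 0 then v0 else if (k : ℕ) = 1 then v1 else 0 := by
    intro k hk cc hcc hcceq
    unfold MixedMat.entry
    rw [dif_pos hk, dif_pos hcc]
    have := hc ⟨(k : ℕ), hk⟩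
    simp only at this
    rw [show (⟨cc, hcc⟩ : Fin (A.α r)) = c from by
      apply Fin.ext; simpa using hcceq]
    exact this
  by_cases hr : (r : ℕ) = 0
  · -- block 0
    refine ⟨⟨(c : ℕ), ?_⟩, ?_⟩
    · show (c : ℕ) < (stepMat p s i' A).α r
      have hα' : (stepMat p s i' A).α r = p * A.α r := by
        show (if (r : ℕ) = 0 then _ else _) = _
        rw [if_pos hr]
      rw [hα']
      calc (c : ℕ) < A.α r := c.isLt
        _ ≤ p * A.α r := Nat.le_mul_of_pos_left _ hp
    · intro k
      have hk2 : (k : ℕ) < A.m + 1 := k.isLt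
      show (if (r : ℕ) = 0 then _ else _) = _
      rw [if_pos hr]
      by_cases hk : (k : ℕ) < A.m
      · rw [if_pos hk]
        exact hcopy k hk _ (by rw [Nat.mod_eq_of_lt c.isLt]; exact c.isLt)
          (Nat.mod_eq_of_lt c.isLt)
      · rw [if_neg hk]
        have hk' : (k : ℕ) = A.m := by omega
        rw [Nat.div_eq_of_lt c.isLt]
        rw [if_neg (by omega), if_neg (by omega)]
        exact Nat.cast_zero
  · by_cases hcond : (r : ℕ) + i' + 1 ≤ s
    · -- the P block: land in the A-copies part, first copy (constant 0)
      refine ⟨⟨(p - 1) * p ^ ((r : ℕ) * (A.m - 1)) + (c : ℕ), ?_⟩, ?_⟩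
      · show _ < (stepMat p s i' A).α r
        have hα' : (stepMat p s i' A).α r
            = (p - 1) * p ^ ((r : ℕ) * (A.m - 1)) + p ^ ((r : ℕ) + 1) * A.α r := by
          show (if (r : ℕ) = 0 then _ else _) = _
          rw [if_neg hr, if_pos hcond]
        rw [hα']
        have h1 : (c : ℕ) < p ^ ((r : ℕ) + 1) * A.α r := by
          calc (c : ℕ) < A.α r := c.isLt
            _ ≤ p ^ ((r : ℕ) + 1) * A.α r :=
              Nat.le_mul_of_pos_left _ (pow_pos hp _)
        omega
      · intro k
        have hk2 : (k : ℕ) < A.m + 1 := k.isLt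
        show (if (r : ℕ) = 0 then _ else _) = _
        rw [if_neg hr, if_pos hcond]
        have hoff : ¬ ((p - 1) * p ^ ((r : ℕ) * (A.m - 1)) + (c : ℕ)
            < (p - 1) * p ^ ((r : ℕ) * (A.m - 1))) := by omega
        rw [if_neg hoff]
        have hsub : (p - 1) * p ^ ((r : ℕ) * (A.m - 1)) + (c : ℕ)
            - (p - 1) * p ^ ((r : ℕ) * (A.m - 1)) = (c : ℕ) := by omega
        rw [hsub]
        by_cases hk : (k : ℕ) < A.m
        · rw [if_pos hk]
          exact hcopy k hk _ (by rw [Nat.mod_eq_of_lt c.isLt]; exact c.isLt)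
            (Nat.mod_eq_of_lt c.isLt)
        · rw [if_neg hk]
          rw [Nat.div_eq_of_lt c.isLt]
          rw [if_neg (by omega), if_neg (by omega)]
          exact Nat.cast_zero
    · -- the Q block
      refine ⟨⟨(c : ℕ), ?_⟩, ?_⟩
      · show (c : ℕ) < (stepMat p s i' A).α r
        have hα' : (stepMat p s i' A).α r = p ^ (s - i') * A.α r := by
          show (if (r : ℕ) = 0 then _ else _) = _
          rw [if_neg hr, if_neg hcond]
        rw [hα']
        calc (c : ℕ) < A.α r := c.isLt
          _ ≤ p ^ (s - i') * A.α r :=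
            Nat.le_mul_of_pos_left _ (pow_pos hp _)
      · intro k
        have hk2 : (k : ℕ) < A.m + 1 := k.isLt
        show (if (r : ℕ) = 0 then _ else _) = _
        rw [if_neg hr, if_neg hcond]
        by_cases hk : (k : ℕ) < A.m
        · rw [if_pos hk]
          exact hcopy k hk _ (by rw [Nat.mod_eq_of_lt c.isLt]; exact c.isLt)
            (Nat.mod_eq_of_lt c.isLt)
        · rw [if_neg hk]
          rw [Nat.div_eq_of_lt c.isLt, Nat.mul_zero]
          rw [if_neg (by omega), if_neg (by omega)]
          exact Nat.cast_zero

private lemma AMat_pres {p s : ℕ} (t : Fin s → ℕ)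
    (P : MixedMat p s → Prop)
    (hbase : P (baseMat p s))
    (hstep : ∀ (i' : ℕ) (A : MixedMat p s), P A → P (stepMat p s i' A)) :
    P (AMat p s t) := by
  unfold AMat
  have hiter : ∀ (i' : ℕ) (n : ℕ) (B : MixedMat p s), P B → P ((stepMat p s i')^[n] B) := by
    intro i' n
    induction n with
    | zero => intro B hB; exact hB
    | succ n ihn =>
      intro B hB
      rw [Function.iterate_succ_apply']
      exact hstep _ _ (ihn B hB)
  have key : ∀ (l : List (Fin s)) (B : MixedMat p s), P B →
      P (l.foldl
        (fun A (i : Fin s) =>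
          (stepMat p s i.val)^[if i.val = 0 ∨ i.val = s - 1 then t i - 1 else t i] A) B) := by
    intro l
    induction l with
    | nil => intro B hB; exact hB
    | cons a l ih =>
      intro B hB
      rw [List.foldl_cons]
      exact ih _ (hiter _ _ _ hB)
  exact key _ _ hbase

/-- For `p ≥ 3` prime, the `ℤ_pℤ_{p²}⋯ℤ_{p^s}`-linear generalized Hadamard code
`Φ(ℋ_p^{t₁,…,t_s})` is nonlinear over `ℤ_p`, i.e. it is not a `ℤ_p`-linear subspace. -/
theorem nonlinear_p_ge_3 (p s : ℕ) (hp : p.Prime) (hp3 : 3 ≤ p) (hs : 2 ≤ s)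
    (t : Fin s → ℕ) (ht1 : 1 ≤ t ⟨0, by omega⟩) (hts : 1 ≤ t ⟨s - 1, by omega⟩) :
    ¬ ∃ W : Submodule (ZMod p) (GrayIdx p s (AMat p s t).α → ZMod p),
        (W : Set (GrayIdx p s (AMat p s t).α → ZMod p)) = PhiCode p s t := by
  rintro ⟨W, hW⟩
  have hp1 : 1 < p := by omega
  obtain ⟨j, hj⟩ := hp.odd_of_ne_two (by omega)
  set d : ℕ := (p + 1) / 2 with hdd
  have hd2 : 2 * d = p + 1 := by omega
  have hd1 : 1 ≤ d := by omega
  have hdp : d < p := by omega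
  have hs0 : 0 < s := by omega
  let r0 : Fin s := ⟨0, hs0⟩
  let rr : Fin s := ⟨s - 1, by omega⟩
  have hr0v : (r0 : ℕ) = 0 := rfl
  have hrrv : (rr : ℕ) = s - 1 := rfl
  have hrr0 : ¬ (rr : ℕ) = 0 := by rw [hrrv]; omega
  have hrr1 : 1 ≤ (rr : ℕ) := by omega
  have hs1 : ¬ (s - 1 = 0) := by omega
  haveI hNZ0 : NeZero (p ^ ((r0 : ℕ) + 1)) := ⟨pow_ne_zero _ (by omega)⟩
  haveI hNZr : NeZero (p ^ ((rr : ℕ) + 1)) := ⟨pow_ne_zero _ (by omega)⟩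
  -- the three special columns of `AMat`
  have hP := AMat_pres (p := p) (s := s) t
    (fun B => 2 ≤ B.m
      ∧ specCol p s B r0 ((p ^ (r0 : ℕ) : ℕ) : ZMod (p ^ ((r0 : ℕ) + 1)))
          (((0 : ℕ) : ℕ) : ZMod (p ^ ((r0 : ℕ) + 1)))
      ∧ specCol p s B rr ((p ^ (rr : ℕ) : ℕ) : ZMod (p ^ ((rr : ℕ) + 1)))
          (((1 : ℕ) : ℕ) : ZMod (p ^ ((rr : ℕ) + 1)))
      ∧ specCol p s B rr ((p ^ (rr : ℕ) : ℕ) : ZMod (p ^ ((rr : ℕ) + 1)))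
          ((d : ℕ) : ZMod (p ^ ((rr : ℕ) + 1))))
    ?base ?step
  case base =>
    refine ⟨Nat.le_refl 2, ⟨⟨0, ?_⟩, ?_⟩, ⟨⟨0, ?_⟩, ?_⟩, ⟨⟨d - 1, ?_⟩, ?_⟩⟩
    · show 0 < if (r0 : ℕ) = 0 then p else p - 1
      rw [if_pos hr0v]; omega
    · intro k
      have hk2 : (k : ℕ) < 2 := k.isLt
      by_cases hk0 : (k : ℕ) = 0
      · simp [baseMat, hk0]
      · have hk1 : (k : ℕ) = 1 := by omega
        simp [baseMat, hk0, hk1, hr0v]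
    · show 0 < if (rr : ℕ) = 0 then p else p - 1
      rw [if_neg hrr0]; omega
    · intro k
      have hk2 : (k : ℕ) < 2 := k.isLt
      by_cases hk0 : (k : ℕ) = 0
      · simp [baseMat, hk0]
      · have hk1 : (k : ℕ) = 1 := by omega
        simp [baseMat, hk0, hk1, hrr0, hs1]
    · show d - 1 < if (rr : ℕ) = 0 then p else p - 1
      rw [if_neg hrr0]; omega
    · intro k
      have hk2 : (k : ℕ) < 2 := k.isLt
      by_cases hk0 : (k : ℕ) = 0
      · simp [baseMat, hk0]
      · have hk1 : (k : ℕ) = 1 := by omega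
        simp [baseMat, hk0, hk1, hrr0, hs1, show d - 1 + 1 = d by omega]
  case step =>
    intro i' A hA
    obtain ⟨hm, hA0, hAa, hAb⟩ := hA
    exact ⟨by show 2 ≤ A.m + 1; omega,
      specCol_step (by omega) i' hm hA0,
      specCol_step (by omega) i' hm hAa,
      specCol_step (by omega) i' hm hAb⟩
  obtain ⟨hm2, ⟨c0, hc0⟩, ⟨ca, hca⟩, ⟨cb, hcb⟩⟩ := hP
  have hmlt : 1 < (AMat p s t).m := by omega
  set u := (AMat p s t).row ⟨1, hmlt⟩ with hu
  have hu0 : u r0 c0 = (((0 : ℕ) : ℕ) : ZMod (p ^ ((r0 : ℕ) + 1))) := by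
    have h := hc0 ⟨1, hmlt⟩
    rwa [if_neg (by norm_num), if_pos (by norm_num)] at h
  have hua : u rr ca = (((1 : ℕ) : ℕ) : ZMod (p ^ ((rr : ℕ) + 1))) := by
    have h := hca ⟨1, hmlt⟩
    rwa [if_neg (by norm_num), if_pos (by norm_num)] at h
  have hub : u rr cb = ((d : ℕ) : ZMod (p ^ ((rr : ℕ) + 1))) := by
    have h := hcb ⟨1, hmlt⟩
    rwa [if_neg (by norm_num), if_pos (by norm_num)] at h
  have hU : u ∈ HCode p s t := AddSubgroup.subset_closure (Set.mem_range_self _)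
  have hΦu : PhiMap p s (AMat p s t).α u ∈ (W : Set (GrayIdx p s (AMat p s t).α → ZMod p)) := by
    rw [hW]; exact ⟨u, hU, rfl⟩
  have hsum : PhiMap p s (AMat p s t).α u + PhiMap p s (AMat p s t).α u ∈ PhiCode p s t := by
    rw [← hW]
    exact W.add_mem hΦu hΦu
  obtain ⟨x, hxH, hx⟩ := hsum
  have he : 2 ≤ (rr : ℕ) + 1 := by omega
  -- value of x at column a
  have hxa : x rr ca = ((2 : ℕ) : ZMod (p ^ ((rr : ℕ) + 1))) := by
    apply gray_eq' hp1 he _ (show (2 : ℕ) < p by omega)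
    intro z
    have hq : grayMap p ((rr : ℕ) + 1) (x rr ca) z
        = grayMap p ((rr : ℕ) + 1) (u rr ca) z + grayMap p ((rr : ℕ) + 1) (u rr ca) z :=
      congrFun hx ⟨rr, (ca, z)⟩
    rw [hua, gray_const' hp1 he (show (1 : ℕ) < p by omega) z] at hq
    rw [hq]
    push_cast
    ring
  -- value of x at column b
  have hxb : x rr cb = ((1 : ℕ) : ZMod (p ^ ((rr : ℕ) + 1))) := by
    apply gray_eq' hp1 he _ (show (1 : ℕ) < p by omega)
    intro z
    have hq : grayMap p ((rr : ℕ) + 1) (x rr cb) z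
        = grayMap p ((rr : ℕ) + 1) (u rr cb) z + grayMap p ((rr : ℕ) + 1) (u rr cb) z :=
      congrFun hx ⟨rr, (cb, z)⟩
    rw [hub, gray_const' hp1 he hdp z] at hq
    rw [hq]
    have hmod : ((2 * d : ℕ) : ZMod p) = ((1 : ℕ) : ZMod p) := by
      rw [hd2]; push_cast; simp
    calc ((d : ℕ) : ZMod p) * (pdigit p 0 (z : ℕ) : ZMod p)
          + ((d : ℕ) : ZMod p) * (pdigit p 0 (z : ℕ) : ZMod p)
        = ((2 * d : ℕ) : ZMod p) * (pdigit p 0 (z : ℕ) : ZMod p) := by push_cast; ring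
      _ = ((1 : ℕ) : ZMod p) * (pdigit p 0 (z : ℕ) : ZMod p) := by rw [hmod]
  -- value of x at column g0
  have hx0 : x r0 c0 = 0 := by
    have hz0pos : 0 < p ^ (r0 : ℕ) := pow_pos (by omega) _
    set z0 : Fin (p ^ (r0 : ℕ)) := ⟨0, hz0pos⟩ with hz0
    have hg1 : ∀ y : ZMod (p ^ ((r0 : ℕ) + 1)),
        grayMap p ((r0 : ℕ) + 1) y z0 = ((y.val % p : ℕ) : ZMod p) := by
      intro y
      show (pdigit p ((r0 : ℕ) + 1 - 1) y.val : ZMod p)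
          + ∑ i ∈ Finset.range ((r0 : ℕ) + 1 - 1),
            (pdigit p i y.val : ZMod p) * (pdigit p i ((z0 : Fin _) : ℕ) : ZMod p)
        = ((y.val % p : ℕ) : ZMod p)
      simp [pdigit, hr0v]
    have hq : grayMap p ((r0 : ℕ) + 1) (x r0 c0) z0
        = grayMap p ((r0 : ℕ) + 1) (u r0 c0) z0 + grayMap p ((r0 : ℕ) + 1) (u r0 c0) z0 :=
      congrFun hx ⟨r0, (c0, z0)⟩
    rw [hg1, hg1, hu0] at hq
    simp at hq
    have hvlt : (x r0 c0).val < p := by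
      have h1 := ZMod.val_lt (x r0 c0)
      have h2 : p ^ ((r0 : ℕ) + 1) = p := by rw [hr0v, pow_one]
      omega
    have hv0 : (x r0 c0).val % p = 0 := by
      have h3 : (x r0 c0).val % p < p := Nat.mod_lt _ (show 0 < p by omega)
      refine zmod_natCast_inj' h3 (show (0 : ℕ) < p by omega) ?_
      simpa using hq
    rw [Nat.mod_eq_of_lt hvlt] at hv0
    exact (ZMod.val_eq_zero _).mp hv0
  -- the additive functional F
  let F : MixedVec p s (AMat p s t).α → ZMod (p ^ ((rr : ℕ) + 1)) := fun y =>
    ((d - 1 : ℕ) : ZMod (p ^ ((rr : ℕ) + 1)))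
        * ((p ^ (rr : ℕ) * (y r0 c0).val : ℕ) : ZMod (p ^ ((rr : ℕ) + 1)))
      - ((d : ℕ) : ZMod (p ^ ((rr : ℕ) + 1))) * y rr ca + y rr cb
  have hFadd : ∀ a b, F (a + b) = F a + F b := by
    intro a b
    show ((d - 1 : ℕ) : ZMod (p ^ ((rr : ℕ) + 1)))
        * ((p ^ (rr : ℕ) * ((a + b) r0 c0).val : ℕ) : ZMod (p ^ ((rr : ℕ) + 1)))
      - ((d : ℕ) : ZMod (p ^ ((rr : ℕ) + 1))) * ((a + b) rr ca) + ((a + b) rr cb) = _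
    have e1 : (a + b) r0 c0 = a r0 c0 + b r0 c0 := rfl
    have e2 : (a + b) rr ca = a rr ca + b rr ca := rfl
    have e3 : (a + b) rr cb = a rr cb + b rr cb := rfl
    rw [e1, e2, e3, ZMod.val_add, iota_mod' p (rr : ℕ) (r0 : ℕ)]
    show _ = ((d - 1 : ℕ) : ZMod (p ^ ((rr : ℕ) + 1)))
        * ((p ^ (rr : ℕ) * (a r0 c0).val : ℕ) : ZMod (p ^ ((rr : ℕ) + 1)))
      - ((d : ℕ) : ZMod (p ^ ((rr : ℕ) + 1))) * (a rr ca) + (a rr cb)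
      + (((d - 1 : ℕ) : ZMod (p ^ ((rr : ℕ) + 1)))
        * ((p ^ (rr : ℕ) * (b r0 c0).val : ℕ) : ZMod (p ^ ((rr : ℕ) + 1)))
      - ((d : ℕ) : ZMod (p ^ ((rr : ℕ) + 1))) * (b rr ca) + (b rr cb))
    push_cast
    ring
  have hF0 : F 0 = 0 := by
    show ((d - 1 : ℕ) : ZMod (p ^ ((rr : ℕ) + 1)))
        * ((p ^ (rr : ℕ) * ((0 : MixedVec p s (AMat p s t).α) r0 c0).val : ℕ)
            : ZMod (p ^ ((rr : ℕ) + 1)))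
      - ((d : ℕ) : ZMod (p ^ ((rr : ℕ) + 1))) * ((0 : MixedVec p s (AMat p s t).α) rr ca)
      + ((0 : MixedVec p s (AMat p s t).α) rr cb) = 0
    have e1 : ((0 : MixedVec p s (AMat p s t).α) r0 c0) = 0 := rfl
    have e2 : ((0 : MixedVec p s (AMat p s t).α) rr ca) = 0 := rfl
    have e3 : ((0 : MixedVec p s (AMat p s t).α) rr cb) = 0 := rfl
    rw [e1, e2, e3, ZMod.val_zero, Nat.mul_zero]
    push_cast
    ring
  have hFgen : ∀ g ∈ Set.range (AMat p s t).row, F g = 0 := by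
    rintro g ⟨k, rfl⟩
    show ((d - 1 : ℕ) : ZMod (p ^ ((rr : ℕ) + 1)))
        * ((p ^ (rr : ℕ) * ((AMat p s t).row k r0 c0).val : ℕ) : ZMod (p ^ ((rr : ℕ) + 1)))
      - ((d : ℕ) : ZMod (p ^ ((rr : ℕ) + 1))) * ((AMat p s t).row k rr ca)
      + ((AMat p s t).row k rr cb) = 0
    rw [hc0 k, hca k, hcb k]
    by_cases hk0 : (k : ℕ) = 0
    · rw [if_pos hk0, if_pos hk0, if_pos hk0]
      have hval : (((p ^ (r0 : ℕ) : ℕ) : ZMod (p ^ ((r0 : ℕ) + 1)))).val = 1 := by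
        have hlt : p ^ (r0 : ℕ) < p ^ ((r0 : ℕ) + 1) := Nat.pow_lt_pow_right hp1 (by omega)
        rw [ZMod.val_cast_of_lt hlt, hr0v, pow_zero]
      rw [hval, Nat.mul_one, Nat.cast_sub hd1]
      push_cast
      ring
    · by_cases hk1 : (k : ℕ) = 1
      · rw [if_neg hk0, if_pos hk1, if_neg hk0, if_pos hk1, if_neg hk0, if_pos hk1]
        have hval : ((((0 : ℕ) : ℕ) : ZMod (p ^ ((r0 : ℕ) + 1)))).val = 0 := by simp
        rw [hval, Nat.mul_zero]
        push_cast
        ring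
      · rw [if_neg hk0, if_neg hk1, if_neg hk0, if_neg hk1, if_neg hk0, if_neg hk1]
        rw [ZMod.val_zero, Nat.mul_zero]
        push_cast
        ring
  have hFH : ∀ y ∈ HCode p s t, F y = 0 := by
    intro y hy
    refine AddSubgroup.closure_induction (p := fun g _ => F g = 0) ?_ hF0 ?_ ?_ hy
    · exact fun g hg => hFgen g hg
    · intro a b _ _ ha hb
      rw [hFadd a b, ha, hb, add_zero]
    · intro a _ ha
      have h := hFadd a (-a)
      rw [add_neg_cancel, hF0, ha, zero_add] at h
      exact h.symm
  have hzero : ((d - 1 : ℕ) : ZMod (p ^ ((rr : ℕ) + 1)))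
      * ((p ^ (rr : ℕ) * (x r0 c0).val : ℕ) : ZMod (p ^ ((rr : ℕ) + 1)))
    - ((d : ℕ) : ZMod (p ^ ((rr : ℕ) + 1))) * (x rr ca) + (x rr cb) = 0 := hFH x hxH
  rw [hx0, hxa, hxb, ZMod.val_zero, Nat.mul_zero] at hzero
  have h2d : ((2 * d : ℕ) : ZMod (p ^ ((rr : ℕ) + 1))) = 1 := by
    push_cast
    push_cast at hzero
    linear_combination -hzero
  rw [hd2] at h2d
  push_cast at h2d
  have hfin : ((p : ℕ) : ZMod (p ^ ((rr : ℕ) + 1))) = 0 := by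
    linear_combination h2d
  have hdvd : p ^ ((rr : ℕ) + 1) ∣ p := (ZMod.natCast_eq_zero_iff p _).mp hfin
  have hle : p ^ ((rr : ℕ) + 1) ≤ p := Nat.le_of_dvd (by omega) hdvd
  have hgt : p < p ^ ((rr : ℕ) + 1) := by
    calc p = p ^ 1 := (pow_one p).symm
      _ < p ^ ((rr : ℕ) + 1) := Nat.pow_lt_pow_right hp1 (by omega)
  omega
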